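/- In a rooted ordered tree, consider the modified DFS traversal Trav in which each leaf is visited twice consecutively (via a self-loop) and each internal vertex is visited twice (first visit before descending to its first child, second visit before moving to its next brother or parent). Then for every vertex v, the number of vertex-visits occurring strictly before the first visit to v is even if and only if the depth (level) of v is even. -/

import Mathlib

/-- A finite rooted ordered tree: a root with an ordered list of subtrees. -/
inductive OTree : Type where
  | node : List OTree → OTree

mutual
/-- The visit sequence of the traversal `Trav` of the subtree rooted at the
vertex with address `a` (addresses are lists of child indices from the root;
the depth of a vertex is the length of its address).  A leaf is visited twice
consecutively (via its self-loop); an internal vertex is visited once before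
descending to its first child and a second time after the second visit to its
last child (i.e. on moving back to the parent). -/
def trav : OTree → List ℕ → List (List ℕ)
  | .node [], a => [a, a]
  | .node (t :: ts), a => a :: (travList (t :: ts) a 0 ++ [a])

def travList : List OTree → List ℕ → ℕ → List (List ℕ)
  | [], _, _ => []
  | t :: ts, a, i => trav t (a ++ [i]) ++ travList ts a (i + 1)
end


section Helpers
variable {α : Type*} [BEq α] [LawfulBEq α]

theorem indexOf_cons_self' (a : α) (l : List α) : (a :: l).idxOf a = 0 := by
  simp [List.idxOf_cons]

theorem indexOf_cons_ne' {a b : α} (l : List α) (h : a ≠ b) :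
    (b :: l).idxOf a = l.idxOf a + 1 := by
  have hb : (b == a) = false := beq_eq_false_iff_ne.mpr (Ne.symm h)
  simp [List.idxOf_cons, hb]

theorem indexOf_append_mem' {a : α} {l₁ : List α} (l₂ : List α) (h : a ∈ l₁) :
    (l₁ ++ l₂).idxOf a = l₁.idxOf a := by
  induction l₁ with
  | nil => simp at h
  | cons b l ih =>
    by_cases hb : a = b
    · subst hb; simp [indexOf_cons_self']
    · have h' : a ∈ l := by
        rcases List.mem_cons.mp h with h | h
        · exact absurd h hb
        · exact h
      rw [List.cons_append, indexOf_cons_ne' _ hb, indexOf_cons_ne' _ hb, ih h']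

theorem indexOf_append_not_mem' {a : α} {l₁ : List α} (l₂ : List α) (h : a ∉ l₁) :
    (l₁ ++ l₂).idxOf a = l₁.length + l₂.idxOf a := by
  induction l₁ with
  | nil => simp
  | cons b l ih =>
    have hb : a ≠ b := fun e => h (e ▸ List.mem_cons_self (a := b) (l := l))
    have h' : a ∉ l := fun e => h (List.mem_cons_of_mem _ e)
    rw [List.cons_append, indexOf_cons_ne' _ hb, ih h', List.length_cons]
    omega

end Helpers

mutual
theorem even_length_trav (t : OTree) (p : List ℕ) : (trav t p).length % 2 = 0 := by
  match t with
  | .node [] => simp [trav]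
  | .node (s :: ss) =>
    have h := even_length_travList (s :: ss) p 0
    simp only [trav, List.length_cons, List.length_append, List.length_singleton,
      List.length_nil]
    omega

theorem even_length_travList (ts : List OTree) (p : List ℕ) (i : ℕ) :
    (travList ts p i).length % 2 = 0 := by
  match ts with
  | [] => simp [travList]
  | t :: ts =>
    have h1 := even_length_trav t (p ++ [i])
    have h2 := even_length_travList ts p (i + 1)
    simp only [travList, List.length_append]
    omega
end

mutual
theorem key_trav (t : OTree) (p a : List ℕ) (h : a ∈ trav t p) :
    ((trav t p).idxOf a + p.length) % 2 = a.length % 2 := by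
  match t with
  | .node [] =>
    simp only [trav, List.mem_cons, List.mem_singleton, or_self,
      List.not_mem_nil, or_false] at h
    subst h
    simp [trav, indexOf_cons_self']
  | .node (s :: ss) =>
    by_cases hap : a = p
    · subst hap
      simp [trav, indexOf_cons_self']
    · have ha' : a ∈ travList (s :: ss) p 0 := by
        simp only [trav, List.mem_cons, List.mem_append, List.mem_singleton,
          List.not_mem_nil, or_false] at h
        tauto
      have hk := key_travList (s :: ss) p 0 a ha'
      have hidx : (trav (.node (s :: ss)) p).idxOf a
          = (travList (s :: ss) p 0).idxOf a + 1 := by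
        show (p :: (travList (s :: ss) p 0 ++ [p])).idxOf a = _
        rw [indexOf_cons_ne' _ hap, indexOf_append_mem' _ ha']
      rw [hidx]
      omega

theorem key_travList (ts : List OTree) (p : List ℕ) (i : ℕ) (a : List ℕ)
    (h : a ∈ travList ts p i) :
    ((travList ts p i).idxOf a + p.length + 1) % 2 = a.length % 2 := by
  match ts with
  | [] => simp [travList] at h
  | t :: ts =>
    by_cases hm : a ∈ trav t (p ++ [i])
    · have hk := key_trav t (p ++ [i]) a hm
      have hidx : (travList (t :: ts) p i).idxOf a = (trav t (p ++ [i])).idxOf a := by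
        show (trav t (p ++ [i]) ++ travList ts p (i + 1)).idxOf a = _
        exact indexOf_append_mem' _ hm
      rw [hidx]
      simp only [List.length_append, List.length_singleton] at hk
      omega
    · have ha' : a ∈ travList ts p (i + 1) := by
        simp only [travList, List.mem_append] at h
        tauto
      have hk := key_travList ts p (i + 1) a ha'
      have hev := even_length_trav t (p ++ [i])
      have hidx : (travList (t :: ts) p i).idxOf a
          = (trav t (p ++ [i])).length + (travList ts p (i + 1)).idxOf a := by
        show (trav t (p ++ [i]) ++ travList ts p (i + 1)).idxOf a = _
        exact indexOf_append_not_mem' _ hm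
      rw [hidx]
      omega
end

/-- In the traversal `Trav` of a rooted ordered tree, for every vertex `v`
(identified by its address `a`), the number `ν_v⁽¹⁾` of visits strictly before
the first visit to `v` is even iff the depth of `v` is even. -/
theorem trav_first_visit_parity (t : OTree) (a : List ℕ) (ha : a ∈ trav t []) :
    Even ((trav t []).idxOf a) ↔ Even a.length := by
  have hk := key_trav t [] a ha
  simp only [List.length_nil, Nat.add_zero] at hk
  rw [Nat.even_iff, Nat.even_iff]
  omega
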